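/- Let γ = 1 + iδ with δ ∈ ℝ. Then for every n ≥ 0, the successive differences of the discrete power function on the boundary satisfy f_{2n+2} − f_{2n+1} = ∏_{k=1}^{n+1} (2k−1+iδ)/(2k−1−iδ) and f_{2n+1} − f_{2n} = ∏_{k=1}^{n} (2k−1+iδ)/(2k−1−iδ); in particular |f_{n+1} − f_n| = 1 for all n ≥ 0. -/

import Mathlib

open Finset Complex

lemma re_pos_ne' (z : ℂ) (h : 0 < z.re) : z ≠ 0 := by
  intro h0; rw [h0] at h; simp at h

lemma discrete_power_aux (δ : ℝ) (n : ℕ) :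
    (∏ k ∈ Icc 1 n, (2*(k:ℂ) + (1+δ*Complex.I)) / (2*k - (1+δ*Complex.I)))
      * ((1+δ*Complex.I) / (2*(n:ℂ) + (1+δ*Complex.I)))
    = ∏ k ∈ Icc 1 n, (2*(k:ℂ) - 1 + δ*Complex.I) / (2*(k:ℂ) - 1 - δ*Complex.I) := by
  induction n with
  | zero =>
      have h : ((1:ℂ)+δ*Complex.I) ≠ 0 := re_pos_ne' _ (by simp)
      simp [div_self h]
  | succ n ih =>
      rw [Finset.prod_Icc_succ_top (by omega : 1 ≤ n+1),
          Finset.prod_Icc_succ_top (by omega : 1 ≤ n+1), ← ih,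
          mul_assoc, mul_assoc]
      congr 1
      push_cast
      have h1 : (2*((n:ℂ)+1) - (1+δ*Complex.I)) ≠ 0 :=
        re_pos_ne' _ (by simp; nlinarith [(Nat.cast_nonneg n : (0:ℝ) ≤ n)])
      have h2 : (2*((n:ℂ)+1) + (1+δ*Complex.I)) ≠ 0 :=
        re_pos_ne' _ (by simp; positivity)
      have h3 : (2*(n:ℂ) + (1+δ*Complex.I)) ≠ 0 :=
        re_pos_ne' _ (by simp; positivity)
      have h4 : (2*((n:ℂ)+1) - 1 - δ*Complex.I) ≠ 0 :=
        re_pos_ne' _ (by simp; nlinarith [(Nat.cast_nonneg n : (0:ℝ) ≤ n)])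
      field_simp
      ring

lemma discrete_power_absQ (δ : ℝ) (n : ℕ) :
    ‖∏ k ∈ Icc 1 n,
      (2*(k:ℂ) - 1 + δ*Complex.I) / (2*(k:ℂ) - 1 - δ*Complex.I)‖ = 1 := by
  rw [norm_prod]
  apply Finset.prod_eq_one
  intro k hk
  have hk1 : 1 ≤ k := (Finset.mem_Icc.mp hk).1
  have hne : (2*(k:ℂ) - 1 + δ*Complex.I) ≠ 0 := by
    apply re_pos_ne'
    simp
    nlinarith [(Nat.one_le_cast.mpr hk1 : (1:ℝ) ≤ k)]
  have hc : (2*(k:ℂ) - 1 - δ*Complex.I) = starRingEnd ℂ (2*(k:ℂ) - 1 + δ*Complex.I) := by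
    simp [Complex.ext_iff]
  rw [norm_div, hc, Complex.norm_conj, div_self (by simpa [hc] using norm_ne_zero_iff.mpr hne)]

/-- For `γ = 1 + iδ` with `δ ∈ ℝ`, the successive differences of the discrete
power function on the boundary are products of unit complex numbers
`(2k-1+iδ)/(2k-1-iδ)`; in particular all edges have length `1`. -/
theorem discrete_power_unit_edges
    (δ : ℝ) (γ : ℂ) (hγ : γ = 1 + δ * Complex.I)
    (f : ℕ → ℂ)
    (heven : ∀ l : ℕ,
      f (2 * l) = (2 * l / (2 * l + γ)) * ∏ k ∈ Icc 1 l, (2 * (k : ℂ) + γ) / (2 * k - γ))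
    (hodd : ∀ l : ℕ,
      f (2 * l + 1) = ∏ k ∈ Icc 1 l, (2 * (k : ℂ) + γ) / (2 * k - γ)) :
    (∀ n : ℕ,
      f (2 * n + 2) - f (2 * n + 1) =
        ∏ k ∈ Icc 1 (n + 1), (2 * (k : ℂ) - 1 + δ * Complex.I) / (2 * k - 1 - δ * Complex.I) ∧
      f (2 * n + 1) - f (2 * n) =
        ∏ k ∈ Icc 1 n, (2 * (k : ℂ) - 1 + δ * Complex.I) / (2 * k - 1 - δ * Complex.I)) ∧
    ∀ n : ℕ, ‖f (n + 1) - f n‖ = 1 := by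
  subst hγ
  have key : ∀ n : ℕ,
      f (2 * n + 2) - f (2 * n + 1) =
        ∏ k ∈ Icc 1 (n + 1), (2 * (k : ℂ) - 1 + δ * Complex.I) / (2 * k - 1 - δ * Complex.I) ∧
      f (2 * n + 1) - f (2 * n) =
        ∏ k ∈ Icc 1 n, (2 * (k : ℂ) - 1 + δ * Complex.I) / (2 * k - 1 - δ * Complex.I) := by
    intro n
    constructor
    · have e : 2*n+2 = 2*(n+1) := by ring
      rw [e, heven (n+1), hodd n, ← discrete_power_aux δ (n+1),
          Finset.prod_Icc_succ_top (by omega : 1 ≤ n+1)]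
      set P := ∏ k ∈ Icc 1 n, (2*(k:ℂ) + (1+δ*Complex.I)) / (2*k - (1+δ*Complex.I)) with hP
      push_cast
      have h1 : (2*((n:ℂ)+1) - (1+δ*Complex.I)) ≠ 0 :=
        re_pos_ne' _ (by simp; nlinarith [(Nat.cast_nonneg n : (0:ℝ) ≤ n)])
      have h2 : (2*((n:ℂ)+1) + (1+δ*Complex.I)) ≠ 0 :=
        re_pos_ne' _ (by simp; positivity)
      field_simp
      ring
    · rw [hodd n, heven n, ← discrete_power_aux δ n]
      set P := ∏ k ∈ Icc 1 n, (2*(k:ℂ) + (1+δ*Complex.I)) / (2*k - (1+δ*Complex.I)) with hP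
      have h3 : (2*(n:ℂ) + (1+δ*Complex.I)) ≠ 0 :=
        re_pos_ne' _ (by simp; positivity)
      field_simp
      ring
  refine ⟨key, ?_⟩
  intro n
  rcases Nat.even_or_odd n with ⟨m, hm⟩ | ⟨m, hm⟩
  · have h2m : n = 2*m := by omega
    subst h2m
    rw [(key m).2]
    exact discrete_power_absQ δ m
  · subst hm
    rw [show 2*m+1+1 = 2*m+2 from rfl, (key m).1]
    exact discrete_power_absQ δ (m+1)
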